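/- Let E₁ and E₂ be symmetric positive definite k×k real matrices and |r| = 1. Then the block matrix R = [[E₁, r√(E₁E₂)],[r(√(E₁E₂))ᵀ, E₂]] has determinant zero. -/

import Mathlib

open Matrix

/-- The square root of a positive semidefinite matrix, as defined in the older Mathlib
(`Matrix.PosSemidef.sqrt`, since removed). -/
noncomputable def Matrix.PosSemidef.sqrt {n : Type*} [Fintype n] [DecidableEq n]
    {A : Matrix n n ℝ} (hA : A.PosSemidef) : Matrix n n ℝ :=
  (hA.1.eigenvectorUnitary : Matrix n n ℝ) * diagonal (Real.sqrt ∘ hA.1.eigenvalues) *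
    (star (hA.1.eigenvectorUnitary : Matrix n n ℝ))

/-- The principal square root of `E₁ * E₂` for positive definite `E₁, E₂`:
`E₁^{1/2} · (E₁^{1/2} E₂ E₁^{1/2})^{1/2} · E₁^{-1/2}`. -/
noncomputable def principalSqrtMul {k : ℕ} {E₁ E₂ : Matrix (Fin k) (Fin k) ℝ}
    (h₁ : E₁.PosDef) (h₂ : E₂.PosDef) : Matrix (Fin k) (Fin k) ℝ :=
  h₁.posSemidef.sqrt *
    (h₂.posSemidef.mul_mul_conjTranspose_same h₁.posSemidef.sqrt).sqrt *
    h₁.posSemidef.sqrt⁻¹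

theorem Matrix.PosSemidef.sqrt_mul_self {n : Type*} [Fintype n] [DecidableEq n]
    {A : Matrix n n ℝ} (hA : A.PosSemidef) : hA.sqrt * hA.sqrt = A := by
  have hU : (star (hA.1.eigenvectorUnitary : Matrix n n ℝ)) *
      (hA.1.eigenvectorUnitary : Matrix n n ℝ) = 1 := Unitary.coe_star_mul_self _
  have hD : diagonal (Real.sqrt ∘ hA.1.eigenvalues) * diagonal (Real.sqrt ∘ hA.1.eigenvalues)
      = diagonal (RCLike.ofReal ∘ hA.1.eigenvalues) := by
    rw [diagonal_mul_diagonal]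
    congr 1
    funext i
    simp [Real.mul_self_sqrt (hA.eigenvalues_nonneg i)]
  conv_rhs => rw [hA.1.spectral_theorem, Unitary.conjStarAlgAut_apply]
  unfold Matrix.PosSemidef.sqrt
  rw [← hD]
  calc _ = (hA.1.eigenvectorUnitary : Matrix n n ℝ) * diagonal (Real.sqrt ∘ hA.1.eigenvalues) *
      ((star (hA.1.eigenvectorUnitary : Matrix n n ℝ)) *
      (hA.1.eigenvectorUnitary : Matrix n n ℝ)) * diagonal (Real.sqrt ∘ hA.1.eigenvalues) *
      (star (hA.1.eigenvectorUnitary : Matrix n n ℝ)) := by simp only [Matrix.mul_assoc]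
    _ = _ := by rw [hU, Matrix.mul_one]; simp only [Matrix.mul_assoc]

theorem Matrix.PosSemidef.posSemidef_sqrt {n : Type*} [Fintype n] [DecidableEq n]
    {A : Matrix n n ℝ} (hA : A.PosSemidef) : hA.sqrt.PosSemidef := by
  have hd : (diagonal (Real.sqrt ∘ hA.1.eigenvalues)).PosSemidef :=
    posSemidef_diagonal_iff.2 fun i => Real.sqrt_nonneg _
  exact hd.mul_mul_conjTranspose_same _

/-- If `|r| = 1` then `R = [[E₁, r√(E₁E₂)], [r(√(E₁E₂))ᵀ, E₂]]` has determinant zero. -/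
theorem pairwise_block_det_zero (k : ℕ) (hk : 0 < k)
    (E₁ E₂ : Matrix (Fin k) (Fin k) ℝ)
    (h₁ : E₁.PosDef) (h₂ : E₂.PosDef) (r : ℝ) (hr : |r| = 1) :
    (Matrix.fromBlocks E₁ (r • principalSqrtMul h₁ h₂)
        (r • (principalSqrtMul h₁ h₂)ᵀ) E₂).det = 0 := by
  haveI : Nonempty (Fin k) := ⟨⟨0, hk⟩⟩
  set s := h₁.posSemidef.sqrt with hs_def
  set b := (h₂.posSemidef.mul_mul_conjTranspose_same h₁.posSemidef.sqrt).sqrt with hb_def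
  have hss : s * s = E₁ := h₁.posSemidef.sqrt_mul_self
  have hsH : sᵀ = s := h₁.posSemidef.posSemidef_sqrt.1
  have hbb : b * b = s * E₂ * sᴴ :=
    (h₂.posSemidef.mul_mul_conjTranspose_same h₁.posSemidef.sqrt).sqrt_mul_self
  have hsHs : sᴴ = s := h₁.posSemidef.posSemidef_sqrt.1
  have hbb' : b * b = s * E₂ * s := by rw [hbb, hsHs]
  have hbH : bᵀ = b := (h₂.posSemidef.mul_mul_conjTranspose_same _).posSemidef_sqrt.1
  -- invertibility
  have hdetE₂ : IsUnit E₂.det := isUnit_iff_ne_zero.2 (ne_of_gt h₂.det_pos)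
  have hdets : IsUnit s.det := by
    have : s.det * s.det = E₁.det := by rw [← det_mul, hss]
    refine isUnit_iff_ne_zero.2 fun h => ?_
    have := h₁.det_pos
    rw [← ‹s.det * s.det = E₁.det›, h, mul_zero] at this
    exact lt_irrefl _ this
  have hdetb : IsUnit b.det := by
    have hx : b.det * b.det = s.det * E₂.det * s.det := by
      rw [← det_mul, hbb']; rw [det_mul, det_mul]
    refine isUnit_iff_ne_zero.2 fun h => ?_
    rw [h, mul_zero] at hx
    rcases mul_eq_zero.1 hx.symm with h' | h'
    · rcases mul_eq_zero.1 h' with h'' | h''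
      · exact hdets.ne_zero h''
      · exact hdetE₂.ne_zero h''
    · exact hdets.ne_zero h'
  have hsinv : s * s⁻¹ = 1 := mul_nonsing_inv s hdets
  have hsinv' : s⁻¹ * s = 1 := nonsing_inv_mul s hdets
  have hbinv : b * b⁻¹ = 1 := mul_nonsing_inv b hdetb
  have hbinv' : b⁻¹ * b = 1 := nonsing_inv_mul b hdetb
  haveI : Invertible E₂ := h₂.isUnit.invertible
  rw [det_fromBlocks₂₂]
  have hinvOf : (⅟E₂ : Matrix (Fin k) (Fin k) ℝ) = E₂⁻¹ := (invOf_eq_nonsing_inv E₂)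
  -- the Schur complement is zero
  have hS : principalSqrtMul h₁ h₂ = s * b * s⁻¹ := rfl
  have hST : (principalSqrtMul h₁ h₂)ᵀ = s⁻¹ * b * s := by
    rw [hS, transpose_mul, transpose_mul, transpose_nonsing_inv, hsH, hbH, Matrix.mul_assoc]
  have hE₂inv : E₂⁻¹ = s * b⁻¹ * b⁻¹ * s := by
    have h1 : E₂ = s⁻¹ * (b * b) * s⁻¹ := by
      rw [hbb']
      calc E₂ = (s⁻¹ * s) * E₂ * (s * s⁻¹) := by rw [hsinv', hsinv, Matrix.one_mul, Matrix.mul_one]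
      _ = s⁻¹ * (s * E₂ * s) * s⁻¹ := by noncomm_ring
    rw [h1]
    apply inv_eq_right_inv
    calc s⁻¹ * (b * b) * s⁻¹ * (s * b⁻¹ * b⁻¹ * s)
        = s⁻¹ * b * (b * (s⁻¹ * s) * b⁻¹) * b⁻¹ * s := by noncomm_ring
      _ = 1 := by rw [hsinv', Matrix.mul_one, hbinv, Matrix.mul_one,
            Matrix.mul_assoc s⁻¹ b b⁻¹, hbinv, Matrix.mul_one, hsinv']
  have hkey : principalSqrtMul h₁ h₂ * E₂⁻¹ * (principalSqrtMul h₁ h₂)ᵀ = E₁ := by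
    rw [hST, hS, hE₂inv, ← hss]
    calc s * b * s⁻¹ * (s * b⁻¹ * b⁻¹ * s) * (s⁻¹ * b * s)
        = s * (b * (s⁻¹ * s) * b⁻¹) * (b⁻¹ * (s * s⁻¹) * b) * s := by noncomm_ring
      _ = s * s := by rw [hsinv', hsinv, Matrix.mul_one, Matrix.mul_one, hbinv, hbinv',
            Matrix.mul_one, Matrix.mul_one]
  have hr2 : r * r = 1 := by
    have := sq_abs r
    rw [hr, one_pow] at this
    nlinarith [this]
  have hzero : E₁ - (r • principalSqrtMul h₁ h₂) * ⅟E₂ * (r • (principalSqrtMul h₁ h₂)ᵀ) = 0 := by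
    rw [hinvOf, Matrix.smul_mul, Matrix.smul_mul, Matrix.mul_smul, smul_smul, hr2, one_smul, hkey,
      sub_self]
  rw [hzero, det_zero, mul_zero]
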